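/- Let V be an unramified discrete valuation ring of mixed characteristic (0,p), let n ≥ 2, let R = (V[X_1,…,X_n]/(X_1^n+⋯+X_n^n))[X_1t,…,X_nt] be the blow-up algebra, and let I = (X_1t,…,X_nt)R. Then pR ∩ I = pI; equivalently, Tor_1^R(R/pR, R/I) = 0 and the natural surjection I/pI → I·(R/pR) is an isomorphism. -/

import Mathlib

universe u

open MvPolynomial

/-- The Fermat hypersurface ring `V[X₁,…,Xₙ]/(X₁ⁿ+⋯+Xₙⁿ)`. -/
abbrev FermatRing (V : Type u) [CommRing V] (n : ℕ) : Type u :=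
  MvPolynomial (Fin n) V ⧸ Ideal.span {(∑ j : Fin n, (X j : MvPolynomial (Fin n) V) ^ n)}

/-- The blow-up algebra `(V[X₁,…,Xₙ]/(X₁ⁿ+⋯+Xₙⁿ))[X₁t,…,Xₙt]`: the subring of
`(V[X₁,…,Xₙ]/(X₁ⁿ+⋯+Xₙⁿ))[t]` generated over `V[X₁,…,Xₙ]/(X₁ⁿ+⋯+Xₙⁿ)` by
`X₁t, …, Xₙt`. -/
noncomputable abbrev blowupSubalgebra (V : Type u) [CommRing V] (n : ℕ) :
    Subalgebra (FermatRing V n) (Polynomial (FermatRing V n)) :=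
  Algebra.adjoin (FermatRing V n)
    (Set.range fun i : Fin n =>
      Polynomial.C (Ideal.Quotient.mk _ (X i)) * Polynomial.X)

/-- The blow-up algebra as a type. -/
noncomputable abbrev BlowupAlgebra (V : Type u) [CommRing V] (n : ℕ) : Type u :=
  ↥(blowupSubalgebra V n)

/-- The element `Xᵢt` of the blow-up algebra. -/
noncomputable def blowupXt (V : Type u) [CommRing V] (n : ℕ) (i : Fin n) :
    BlowupAlgebra V n :=
  ⟨Polynomial.C (Ideal.Quotient.mk _ (X i)) * Polynomial.X,
    Algebra.subset_adjoin ⟨i, rfl⟩⟩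

/-- The ideal `I = (X₁t, …, Xₙt)` of the blow-up algebra. -/
noncomputable def blowupI (V : Type u) [CommRing V] (n : ℕ) :
    Ideal (BlowupAlgebra V n) :=
  Ideal.span (Set.range (blowupXt V n))

set_option synthInstance.maxHeartbeats 1000000
set_option maxHeartbeats 2000000

-- Lemma 1: p is a nonzerodivisor on the Fermat ring
lemma fermat_p_regular (V : Type u) [CommRing V] [IsDomain V] [IsDiscreteValuationRing V] [CharZero V]
    (p : ℕ) (hp : p.Prime)
    (hunram : IsLocalRing.maximalIdeal V = Ideal.span {(p : V)})
    (n : ℕ) (hn : 2 ≤ n) (a : FermatRing V n) (h : (p : FermatRing V n) * a = 0) : a = 0 := by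
  obtain ⟨g, rfl⟩ := Ideal.Quotient.mk_surjective a
  set f : MvPolynomial (Fin n) V := ∑ j : Fin n, (X j) ^ n with hf
  have hcast : (p : FermatRing V n) = Ideal.Quotient.mk _ (C (p : V)) := by
    rfl
  have h' : (Ideal.Quotient.mk (Ideal.span {f}) (C (p : V) * g)) = 0 := by
    rw [map_mul, ← hcast, h]
  rw [Ideal.Quotient.eq_zero_iff_mem, Ideal.mem_span_singleton] at h'
  obtain ⟨h₁, heq⟩ := h'
  haveI hmax : (Ideal.span {(p : V)}).IsMaximal := hunram ▸ inferInstance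
  letI : Field (V ⧸ Ideal.span {(p : V)}) := Ideal.Quotient.field _
  set π : MvPolynomial (Fin n) V →+* MvPolynomial (Fin n) (V ⧸ Ideal.span {(p : V)}) :=
    MvPolynomial.map (Ideal.Quotient.mk (Ideal.span {(p : V)})) with hπ
  have hπp : π (C (p : V)) = 0 := by
    rw [hπ, map_C, Ideal.Quotient.eq_zero_iff_mem.mpr (Ideal.mem_span_singleton_self _), map_zero]
  have hmul : π f * π h₁ = 0 := by
    rw [← map_mul, ← heq, map_mul, hπp, zero_mul]
  have hπf : π f ≠ 0 := by
    intro h0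
    have h0' := congrArg
      (MvPolynomial.eval (fun j : Fin n => if j = (⟨0, by omega⟩ : Fin n) then
        (1 : V ⧸ Ideal.span {(p : V)}) else 0)) h0
    rw [hπ, hf] at h0'
    simp only [map_sum, map_pow, MvPolynomial.map_X, MvPolynomial.eval_X, map_zero,
      apply_ite (· ^ n), one_pow, zero_pow (by omega : n ≠ 0)] at h0'
    rw [Finset.sum_ite_eq' Finset.univ _ (fun _ => (1 : V ⧸ Ideal.span {(p : V)}))] at h0'
    simp at h0'
  have hπh : π h₁ = 0 := by
    rcases mul_eq_zero.mp hmul with h0 | h0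
    · exact absurd h0 hπf
    · exact h0
  have hker : h₁ ∈ RingHom.ker π := hπh
  rw [hπ, MvPolynomial.ker_map, Ideal.mk_ker, Ideal.map_span, Set.image_singleton,
    Ideal.mem_span_singleton] at hker
  obtain ⟨h₂, rfl⟩ := hker
  have hpne : (C (p : V) : MvPolynomial (Fin n) V) ≠ 0 := by
    simp [Nat.cast_ne_zero.mpr hp.ne_zero]
  have : g = f * h₂ := by
    apply mul_left_cancel₀ hpne
    rw [heq]; ring
  rw [this, map_mul, Ideal.Quotient.eq_zero_iff_mem.mpr (Ideal.mem_span_singleton_self f),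
    zero_mul]

/-- The constant-coefficient ring hom on the blow-up algebra. -/
noncomputable def blowupCC (V : Type u) [CommRing V] (n : ℕ) :
    BlowupAlgebra V n →+* FermatRing V n :=
  Polynomial.constantCoeff.comp (blowupSubalgebra V n).val.toRingHom

lemma blowupCC_apply (V : Type u) [CommRing V] (n : ℕ) (f : BlowupAlgebra V n) :
    blowupCC V n f = (f : Polynomial (FermatRing V n)).coeff 0 := rfl

instance blowupIdeal_isTwoSided (V : Type u) [CommRing V] (n : ℕ) (I : Ideal (BlowupAlgebra V n)) :
    I.IsTwoSided :=
  ⟨fun b ha => by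
    have h := I.mul_mem_left b ha
    convert h using 1
    exact mul_comm (G := BlowupAlgebra V n) _ _⟩

lemma mem_blowupI_iff (V : Type u) [CommRing V] (n : ℕ) (f : BlowupAlgebra V n) :
    f ∈ blowupI V n ↔ blowupCC V n f = 0 := by
  constructor
  · intro hf
    have hle : blowupI V n ≤ RingHom.ker (blowupCC V n) := by
      rw [blowupI, Ideal.span_le]
      rintro x ⟨i, rfl⟩
      simp [RingHom.mem_ker, blowupCC_apply, blowupXt]
    exact hle hf
  · intro hf
    have key : ∀ (x : Polynomial (FermatRing V n)) (hx : x ∈ blowupSubalgebra V n),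
        (⟨x, hx⟩ : BlowupAlgebra V n) -
          algebraMap (FermatRing V n) (BlowupAlgebra V n) (x.coeff 0) ∈ blowupI V n := by
      intro x hx
      induction hx using Algebra.adjoin_induction with
      | mem x hxs =>
        obtain ⟨i, rfl⟩ := hxs
        have h0 : (Polynomial.C ((Ideal.Quotient.mk _ (X i) : FermatRing V n)) *
            Polynomial.X).coeff 0 = 0 := by simp
        rw [h0, map_zero]
        refine (congrArg (· ∈ blowupI V n) (sub_zero (G := BlowupAlgebra V n) _)).mpr ?_
        exact Ideal.subset_span ⟨i, rfl⟩
      | algebraMap r =>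
        have h0 : (algebraMap (FermatRing V n) (Polynomial (FermatRing V n)) r).coeff 0 = r := by
          simp [Polynomial.algebraMap_eq]
        rw [h0]
        have : (⟨algebraMap (FermatRing V n) (Polynomial (FermatRing V n)) r, _⟩ :
            BlowupAlgebra V n) = algebraMap (FermatRing V n) (BlowupAlgebra V n) r := rfl
        rw [this]
        exact (congrArg (· ∈ blowupI V n) (sub_self (G := BlowupAlgebra V n) _)).mpr (zero_mem _)
      | add x y hx hy px py =>
        have e : (⟨x + y, add_mem hx hy⟩ : BlowupAlgebra V n) -
            algebraMap _ _ ((x + y).coeff 0) =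
            ((⟨x, hx⟩ : BlowupAlgebra V n) - algebraMap _ _ (x.coeff 0)) +
            ((⟨y, hy⟩ : BlowupAlgebra V n) - algebraMap _ _ (y.coeff 0)) := by
          have e1 : (⟨x + y, add_mem hx hy⟩ : BlowupAlgebra V n) =
              (⟨x, hx⟩ : BlowupAlgebra V n) + ⟨y, hy⟩ := rfl
          rw [e1, Polynomial.coeff_add, map_add]
          abel
        rw [e]
        exact add_mem px py
      | mul x y hx hy px py =>
        have e : (⟨x * y, mul_mem hx hy⟩ : BlowupAlgebra V n) -
            algebraMap _ _ ((x * y).coeff 0) =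
            (⟨x, hx⟩ : BlowupAlgebra V n) *
              ((⟨y, hy⟩ : BlowupAlgebra V n) - algebraMap _ _ (y.coeff 0)) +
            ((⟨x, hx⟩ : BlowupAlgebra V n) - algebraMap _ _ (x.coeff 0)) *
              algebraMap _ _ (y.coeff 0) := by
          have : (⟨x * y, mul_mem hx hy⟩ : BlowupAlgebra V n) =
              (⟨x, hx⟩ : BlowupAlgebra V n) * ⟨y, hy⟩ := rfl
          rw [this, Polynomial.mul_coeff_zero, map_mul]
          ring
        rw [e]
        exact add_mem (Ideal.mul_mem_left _ _ py) (Ideal.mul_mem_right _ _ px)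
    have := key f.1 f.2
    rw [← blowupCC_apply, hf, map_zero] at this
    exact (congrArg (· ∈ blowupI V n) (sub_zero (G := BlowupAlgebra V n) _)).mp this

set_option synthInstance.maxHeartbeats 1000000 in
set_option maxHeartbeats 2000000 in
/-- Let `V` be an unramified discrete valuation ring of mixed
characteristic `(0, p)`, let `n ≥ 2`, let `R = (V[X₁,…,Xₙ]/(X₁ⁿ+⋯+Xₙⁿ))[X₁t,…,Xₙt]` be
the blow-up algebra and `I = (X₁t,…,Xₙt) ⊆ R`.  Then `pR ∩ I = pI`. -/
theorem blowup_pR_inter_I_eq_pI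
    (V : Type u) [CommRing V] [IsDomain V] [IsDiscreteValuationRing V] [CharZero V]
    (p : ℕ) (hp : p.Prime)
    (hunram : IsLocalRing.maximalIdeal V = Ideal.span {(p : V)})
    (n : ℕ) (hn : 2 ≤ n) :
    Ideal.span {(p : BlowupAlgebra V n)} ⊓ blowupI V n =
      Ideal.span {(p : BlowupAlgebra V n)} * blowupI V n := by
  refine le_antisymm ?_ Ideal.mul_le_inf
  intro a ha
  rw [Submodule.mem_inf] at ha
  obtain ⟨ha1, ha2⟩ := ha
  obtain ⟨g, rfl⟩ := Ideal.mem_span_singleton'.mp ha1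
  have h0 : blowupCC V n (g * (p : BlowupAlgebra V n)) = 0 := (mem_blowupI_iff _ _ _).mp ha2
  rw [map_mul, map_natCast, mul_comm] at h0
  have hg0 : blowupCC V n g = 0 := fermat_p_regular V p hp hunram n hn _ h0
  convert Ideal.mul_mem_mul (Ideal.mem_span_singleton_self _) ((mem_blowupI_iff _ _ _).mpr hg0) using 1
  exact mul_comm (G := BlowupAlgebra V n) _ _
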